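/- Let Γ, Γ₁, Γ₂ be marked n-trees with contractions Γ → Γ₁ and Γ → Γ₂. Then there is a contraction Γ₁ → Γ₂ if and only if the subforest F(Γ,Γ₁) is a subforest of F(Γ,Γ₂). -/

import Mathlib

open SimpleGraph Walk


/-- A marked `n`-tree: a finite tree with `n` labeled marked vertices such that
every vertex of valence (degree) `1` or `2` is marked. -/
structure MarkedTree (n : ℕ) where
  V : Type
  fintypeV : Fintype V
  G : SimpleGraph V
  isTree : G.IsTree
  mark : Fin n → V
  mark_inj : Function.Injective mark
  degCond : ∀ v : V, (G.neighborSet v).ncard ≤ 2 → v ∈ Set.range mark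

/-- A contraction of marked `n`-trees: a surjective cellular (simplicial) map such that
the preimage of every vertex is a subtree (nonempty connected), and marked vertices
map to the corresponding marked vertices. -/
structure TreeContraction {n : ℕ} (T₁ T₂ : MarkedTree n) where
  f : T₁.V → T₂.V
  surj : Function.Surjective f
  map_adj : ∀ {a b : T₁.V}, T₁.G.Adj a b → f a = f b ∨ T₂.G.Adj (f a) (f b)
  fiber_conn : ∀ w : T₂.V, (T₁.G.induce (f ⁻¹' {w})).Connected
  map_mark : ∀ i, f (T₁.mark i) = T₂.mark i

/-- The contracted subforest `F(T₁,T₂)` of a contraction: the set of edges of `T₁`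
whose endpoints are identified by the contraction. -/
def TreeContraction.forest {n : ℕ} {T₁ T₂ : MarkedTree n} (c : TreeContraction T₁ T₂) :
    Set (Sym2 T₁.V) :=
  {e | ∃ a b : T₁.V, e = s(a, b) ∧ T₁.G.Adj a b ∧ c.f a = c.f b}

/-- A label-preserving isomorphism of marked `n`-trees. -/
structure MarkedIso {n : ℕ} (T₁ T₂ : MarkedTree n) where
  e : T₁.V ≃ T₂.V
  adj_iff : ∀ a b : T₁.V, T₁.G.Adj a b ↔ T₂.G.Adj (e a) (e b)
  map_mark : ∀ i, e (T₁.mark i) = T₂.mark i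

variable {n : ℕ} {T T' T₁ T₂ : MarkedTree n}

lemma MarkedTree.path_unique (T : MarkedTree n) {x y : T.V} {P Q : T.G.Walk x y}
    (hP : P.IsPath) (hQ : Q.IsPath) : P = Q := by
  have := isAcyclic_iff_path_unique.mp T.isTree.2 ⟨P, hP⟩ ⟨Q, hQ⟩
  exact congrArg Subtype.val this

lemma MarkedTree.length_eq_dist (T : MarkedTree n) {x y : T.V} {P : T.G.Walk x y}
    (hP : P.IsPath) : P.length = T.G.dist x y := by
  classical
  refine le_antisymm ?_ (SimpleGraph.dist_le P)
  obtain ⟨W, hW⟩ := T.isTree.1.exists_walk_length_eq_dist x y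
  have hb : W.bypass = P := T.path_unique W.bypass_isPath hP
  calc P.length = W.bypass.length := by rw [hb]
    _ ≤ W.length := W.length_bypass_le
    _ = _ := hW

lemma TreeContraction.mem_forest_iff (c : TreeContraction T T') {a b : T.V} :
    s(a,b) ∈ c.forest ↔ T.G.Adj a b ∧ c.f a = c.f b := by
  constructor
  · rintro ⟨p, q, he, hadj, hf⟩
    rw [Sym2.eq_iff] at he
    rcases he with ⟨rfl, rfl⟩ | ⟨rfl, rfl⟩
    · exact ⟨hadj, hf⟩
    · exact ⟨hadj.symm, hf.symm⟩
  · rintro ⟨hadj, hf⟩; exact ⟨a, b, rfl, hadj, hf⟩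

lemma TreeContraction.fiber_walk_const (c : TreeContraction T T') {x y : T.V}
    (h : c.f x = c.f y) {P : T.G.Walk x y} (hP : P.IsPath) :
    ∀ u ∈ P.support, c.f u = c.f x := by
  classical
  set s : Set T.V := c.f ⁻¹' {c.f x} with hs
  have hx : x ∈ s := rfl
  have hy : y ∈ s := by simp [hs, h.symm]
  obtain ⟨W⟩ := (c.fiber_conn (c.f x)).preconnected ⟨x, hx⟩ ⟨y, hy⟩
  let W' := W.map (SimpleGraph.Embedding.induce s).toHom
  have hmap : W'.toPath.1 = P := T.path_unique W'.toPath.2 hP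
  intro u hu
  have hu' : u ∈ W'.support := by
    rw [← hmap] at hu; exact Walk.support_toPath_subset _ hu
  rw [Walk.support_map] at hu'
  obtain ⟨⟨u', hu''⟩, _, rfl⟩ := List.mem_map.mp hu'
  exact hu''

open Classical in
noncomputable def TreeContraction.cmap (c : TreeContraction T T') :
    {x y : T.V} → T.G.Walk x y → T'.G.Walk (c.f x) (c.f y)
  | _, _, .nil => .nil
  | x, _, .cons (v := z) h W =>
    if he : c.f x = c.f z then (c.cmap W).copy he.symm rfl
    else Walk.cons ((c.map_adj h).resolve_left he) (c.cmap W)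

lemma TreeContraction.cmap_nil (c : TreeContraction T T') {x : T.V} :
    c.cmap (.nil : T.G.Walk x x) = .nil := rfl

open Classical in
lemma TreeContraction.cmap_cons (c : TreeContraction T T') {x z y : T.V}
    (h : T.G.Adj x z) (W : T.G.Walk z y) :
    c.cmap (.cons h W) = if he : c.f x = c.f z then (c.cmap W).copy he.symm rfl
      else Walk.cons ((c.map_adj h).resolve_left he) (c.cmap W) := rfl

lemma TreeContraction.mem_support_cmap (c : TreeContraction T T') {x y : T.V}
    (W : T.G.Walk x y) {u : T.V} (hu : u ∈ W.support) : c.f u ∈ (c.cmap W).support := by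
  induction W with
  | nil => simp at hu; simp [hu, cmap_nil]
  | @cons a z b h W ih =>
    rw [cmap_cons]
    rcases List.mem_cons.mp (by simpa using hu) with rfl | hu'
    · split
      · next he => rw [Walk.support_copy]; rw [he]; exact (c.cmap W).start_mem_support
      · exact Walk.start_mem_support _
    · split
      · rw [Walk.support_copy]; exact ih hu'
      · rw [Walk.support_cons]; exact List.mem_cons_of_mem _ (ih hu')

lemma TreeContraction.support_cmap_mem (c : TreeContraction T T') {x y : T.V}
    (W : T.G.Walk x y) {t : T'.V} (ht : t ∈ (c.cmap W).support) :
    ∃ u ∈ W.support, c.f u = t := by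
  induction W with
  | nil =>
    rw [cmap_nil] at ht
    simp only [Walk.support_nil, List.mem_singleton] at ht
    exact ⟨_, Walk.start_mem_support _, ht.symm⟩
  | @cons a z b h W ih =>
    rw [cmap_cons] at ht
    split at ht
    · rw [Walk.support_copy] at ht
      obtain ⟨u, hu, hut⟩ := ih ht
      exact ⟨u, by simp [hu], hut⟩
    · rw [Walk.support_cons] at ht
      rcases List.mem_cons.mp ht with rfl | ht'
      · exact ⟨a, by simp, rfl⟩
      · obtain ⟨u, hu, hut⟩ := ih ht'
        exact ⟨u, by simp [hu], hut⟩

lemma TreeContraction.edges_cmap_mem (c : TreeContraction T T') {x y : T.V}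
    (W : T.G.Walk x y) {e : Sym2 T'.V} (he : e ∈ (c.cmap W).edges) :
    ∃ p q, T.G.Adj p q ∧ e = s(c.f p, c.f q) := by
  induction W with
  | nil => rw [cmap_nil] at he; simp at he
  | @cons a z b h W ih =>
    rw [cmap_cons] at he
    split at he
    · rw [Walk.edges_copy] at he; exact ih he
    · rw [Walk.edges_cons] at he
      rcases List.mem_cons.mp he with rfl | he'
      · exact ⟨a, z, h, rfl⟩
      · exact ih he'

lemma TreeContraction.cmap_isPath (c : TreeContraction T T') {x y : T.V}
    {W : T.G.Walk x y} (hW : W.IsPath) : (c.cmap W).IsPath := by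
  classical
  induction W with
  | nil => exact Walk.IsPath.nil
  | @cons a z b h W ih =>
    have hW' : W.IsPath := hW.of_cons
    have haW : a ∉ W.support := (Walk.cons_isPath_iff h W).mp hW |>.2
    rw [cmap_cons]
    split
    · exact (Walk.isPath_copy _ _ _).mpr (ih hW')
    · next he =>
      rw [Walk.cons_isPath_iff]
      refine ⟨ih hW', fun hmem => ?_⟩
      obtain ⟨u, hu, hut⟩ := c.support_cmap_mem W hmem
      have hua : u ≠ a := fun h' => haW (h' ▸ hu)
      have htp : (W.takeUntil u hu).IsPath := hW'.takeUntil hu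
      have hpath : (Walk.cons h (W.takeUntil u hu)).IsPath :=
        htp.cons (fun hmem' => haW (Walk.support_takeUntil_subset _ hu hmem'))
      have hconst := c.fiber_walk_const hut.symm hpath
      exact he ((hconst z (by
        rw [Walk.support_cons]
        exact List.mem_cons_of_mem _ (Walk.start_mem_support _))).symm)

lemma TreeContraction.edge_lift (c : TreeContraction T T') {a b : T'.V} (hab : T'.G.Adj a b) :
    ∃ p q, T.G.Adj p q ∧ c.f p = a ∧ c.f q = b := by
  classical
  by_contra hno
  push_neg at hno
  obtain ⟨x, hx⟩ := c.surj a
  obtain ⟨y, hy⟩ := c.surj b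
  obtain ⟨P⟩ := T.isTree.1 x y
  let W : T'.G.Walk a b := (c.cmap P).copy hx hy
  have hedge : s(a,b) ∉ W.edges := by
    intro hmem
    rw [Walk.edges_copy] at hmem
    obtain ⟨p, q, hpq, he⟩ := c.edges_cmap_mem P hmem
    rw [Sym2.eq_iff] at he
    rcases he with ⟨ha', hb'⟩ | ⟨hb', ha'⟩
    · exact hno p q hpq ha'.symm hb'.symm
    · exact hno q p hpq.symm hb'.symm ha'.symm
  have hsingle : (Walk.cons hab (Walk.nil)).IsPath := by
    rw [Walk.cons_isPath_iff]
    exact ⟨Walk.IsPath.nil, by simp [hab.ne]⟩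
  have hQ := T'.path_unique W.toPath.2 hsingle
  have : s(a,b) ∈ W.toPath.1.edges := by rw [hQ]; simp
  exact hedge (Walk.edges_toPath_subset W this)

lemma MarkedTree.reach_mark (T : MarkedTree n) {v u : T.V} (h : T.G.Adj v u) :
    ∃ (i : Fin n) (δ : T.G.Walk u (T.mark i)), (Walk.cons h δ).IsPath := by
  classical
  letI := T.fintypeV
  set A : Set T.V := {x | ∃ δ : T.G.Walk u x, (Walk.cons h δ).IsPath} with hA
  have hAne : A.Nonempty := by
    refine ⟨u, Walk.nil, ?_⟩
    rw [Walk.cons_isPath_iff]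
    exact ⟨Walk.IsPath.nil, by simp [h.ne]⟩
  obtain ⟨x, hxA, hxmax⟩ := Set.exists_max_image A (fun x => T.G.dist v x) (Set.toFinite A) hAne
  obtain ⟨δ, hδ⟩ := hxA
  by_cases hm : x ∈ Set.range T.mark
  · obtain ⟨i, rfl⟩ := hm; exact ⟨i, δ, hδ⟩
  exfalso
  set P : T.G.Walk v x := Walk.cons h δ with hP
  have hxv : x ≠ v := fun h' => by
    have := hδ.2; rw [Walk.support_cons] at this
    exact (List.nodup_cons.mp this).1 (h' ▸ Walk.end_mem_support δ)
  -- every neighbor of x in P.support equals P.reverse.getVert 1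
  have hnb : ∀ z, T.G.Adj x z → z ∈ P.support → z = P.reverse.getVert 1 := by
    intro z hz hzs
    have hzx : z ≠ x := hz.ne'
    -- x ∉ support of takeUntil
    have hxnotin : x ∉ (P.takeUntil z hzs).support := by
      intro hmem
      have hnd : P.support.Nodup := hδ.2
      have hspec := P.take_spec hzs
      have : P.support = (P.takeUntil z hzs).support ++ (P.dropUntil z hzs).support.tail := by
        rw [← Walk.support_append, hspec]
      rw [this] at hnd
      have hx2 : x ∈ (P.dropUntil z hzs).support.tail := by
        have hxe : x ∈ (P.dropUntil z hzs).support := Walk.end_mem_support _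
        rw [Walk.support_eq_cons (P.dropUntil z hzs)] at hxe
        rcases List.mem_cons.mp hxe with h' | h'
        · exact absurd h'.symm hzx
        · exact h'
      exact (List.disjoint_of_nodup_append hnd) hmem hx2
    have hQpath : ((P.takeUntil z hzs).concat hz.symm).IsPath := by
      have : ((P.takeUntil z hzs).concat hz.symm).reverse.IsPath := by
        rw [Walk.reverse_concat]
        rw [Walk.cons_isPath_iff]
        exact ⟨(hδ.takeUntil hzs).reverse, by rwa [Walk.support_reverse, List.mem_reverse]⟩
      have := this.reverse
      rwa [Walk.reverse_reverse] at this
    have hQP : (P.takeUntil z hzs).concat hz.symm = P := T.path_unique hQpath hδ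
    have := congrArg (fun (Q : T.G.Walk v x) => Q.reverse.getVert 1) hQP
    rw [← this, Walk.reverse_concat, Walk.getVert_cons_succ, Walk.getVert_zero]
  -- some neighbor of x avoids P.support
  have hdeg : 3 ≤ (T.G.neighborSet x).ncard := by
    by_contra hh; push_neg at hh; exact hm (T.degCond x (by omega))
  have hnbne : ∃ z ∈ T.G.neighborSet x, z ∉ P.support := by
    by_contra hall
    push_neg at hall
    have hsub : T.G.neighborSet x ⊆ {P.reverse.getVert 1} := by
      intro z hz; exact hnb z hz (hall z hz)
    have := Set.ncard_le_ncard hsub (Set.toFinite _)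
    rw [Set.ncard_singleton] at this
    omega
  obtain ⟨z, (hz : T.G.Adj x z), hznot⟩ := hnbne
  have hPz : (P.concat hz).IsPath := by
    have : (P.concat hz).reverse.IsPath := by
      rw [Walk.reverse_concat, Walk.cons_isPath_iff]
      exact ⟨hδ.reverse, by rwa [Walk.support_reverse, List.mem_reverse]⟩
    have := this.reverse
    rwa [Walk.reverse_reverse] at this
  have hzA : z ∈ A := by
    refine ⟨δ.concat hz, ?_⟩
    have : Walk.cons h (δ.concat hz) = P.concat hz := by
      rw [hP, Walk.concat_cons]
    rwa [this]
  have hlt : T.G.dist v x < T.G.dist v z := by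
    rw [← T.length_eq_dist hδ, ← T.length_eq_dist hPz, Walk.length_concat]
    omega
  exact absurd (hxmax z hzA) (by omega)

lemma MarkedTree.dist_add_of_mem_support (T : MarkedTree n) {a b z : T.V} {P : T.G.Walk a b}
    (hP : P.IsPath) (hz : z ∈ P.support) :
    T.G.dist a z + T.G.dist z b = T.G.dist a b := by
  classical
  have hlen : (P.takeUntil z hz).length + (P.dropUntil z hz).length = P.length := by
    rw [← Walk.length_append, P.take_spec hz]
  rw [← T.length_eq_dist hP, ← T.length_eq_dist (hP.takeUntil hz),
    ← T.length_eq_dist (hP.dropUntil hz)]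
  exact hlen

lemma MarkedTree.eq_of_dist_eq_on_path (T : MarkedTree n) {a b z z' : T.V} {P : T.G.Walk a b}
    (hP : P.IsPath) (hz : z ∈ P.support) (hz' : z' ∈ P.support)
    (hd : T.G.dist a z = T.G.dist a z') : z = z' := by
  classical
  have hmem : z' ∈ (P.takeUntil z hz).support ∨ z' ∈ (P.dropUntil z hz).support := by
    rw [← Walk.mem_support_append_iff, P.take_spec hz]; exact hz'
  rcases hmem with h1 | h1
  · have h2 := T.dist_add_of_mem_support (hP.takeUntil hz) h1
    have hzz : T.G.dist z' z = 0 := by omega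
    exact ((T.isTree.1 z' z).dist_eq_zero_iff.mp hzz).symm
  · have h2 := T.dist_add_of_mem_support (hP.dropUntil hz) h1
    have h3 := T.dist_add_of_mem_support hP hz
    have h4 := T.dist_add_of_mem_support hP hz'
    have hzz : T.G.dist z z' = 0 := by omega
    exact (T.isTree.1 z z').dist_eq_zero_iff.mp hzz

lemma MarkedTree.median_unique (T : MarkedTree n) {a b d z z' : T.V}
    {Pab : T.G.Walk a b} {Pac : T.G.Walk a d} {Pbc : T.G.Walk b d}
    (hab : Pab.IsPath) (hac : Pac.IsPath) (hbc : Pbc.IsPath)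
    (hz1 : z ∈ Pab.support) (hz2 : z ∈ Pac.support) (hz3 : z ∈ Pbc.support)
    (hz1' : z' ∈ Pab.support) (hz2' : z' ∈ Pac.support) (hz3' : z' ∈ Pbc.support) :
    z = z' := by
  have e1 := T.dist_add_of_mem_support hab hz1
  have e2 := T.dist_add_of_mem_support hac hz2
  have e3 := T.dist_add_of_mem_support hbc hz3
  have e1' := T.dist_add_of_mem_support hab hz1'
  have e2' := T.dist_add_of_mem_support hac hz2'
  have e3' := T.dist_add_of_mem_support hbc hz3'
  have hc1 : T.G.dist z b = T.G.dist b z := SimpleGraph.dist_comm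
  have hc1' : T.G.dist z' b = T.G.dist b z' := SimpleGraph.dist_comm
  have hd : T.G.dist a z = T.G.dist a z' := by omega
  exact T.eq_of_dist_eq_on_path hab hz1 hz1' hd

lemma MarkedTree.branch_disjoint (T : MarkedTree n) {v u₁ u₂ m₁ m₂ x : T.V}
    {h₁ : T.G.Adj v u₁} {h₂ : T.G.Adj v u₂} (hne : u₁ ≠ u₂)
    {δ₁ : T.G.Walk u₁ m₁} {δ₂ : T.G.Walk u₂ m₂}
    (hp₁ : (Walk.cons h₁ δ₁).IsPath) (hp₂ : (Walk.cons h₂ δ₂).IsPath)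
    (hx₁ : x ∈ δ₁.support) (hx₂ : x ∈ δ₂.support) : False := by
  classical
  have hv₁ : v ∉ δ₁.support := ((Walk.cons_isPath_iff h₁ δ₁).mp hp₁).2
  have hv₂ : v ∉ δ₂.support := ((Walk.cons_isPath_iff h₂ δ₂).mp hp₂).2
  have hq₁ : (Walk.cons h₁ (δ₁.takeUntil x hx₁)).IsPath :=
    (((Walk.cons_isPath_iff h₁ δ₁).mp hp₁).1.takeUntil hx₁).cons
      (fun hmem => hv₁ (Walk.support_takeUntil_subset _ hx₁ hmem))
  have hq₂ : (Walk.cons h₂ (δ₂.takeUntil x hx₂)).IsPath :=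
    (((Walk.cons_isPath_iff h₂ δ₂).mp hp₂).1.takeUntil hx₂).cons
      (fun hmem => hv₂ (Walk.support_takeUntil_subset _ hx₂ hmem))
  have heq := T.path_unique hq₁ hq₂
  have := congrArg (fun (Q : T.G.Walk v x) => Q.getVert 1) heq
  simp only [Walk.getVert_cons_succ, Walk.getVert_zero] at this
  exact hne this

lemma MarkedTree.three_neighbors (T : MarkedTree n) {v : T.V}
    (h : 3 ≤ (T.G.neighborSet v).ncard) :
    ∃ u₁ u₂ u₃, T.G.Adj v u₁ ∧ T.G.Adj v u₂ ∧ T.G.Adj v u₃ ∧ u₁ ≠ u₂ ∧ u₁ ≠ u₃ ∧ u₂ ≠ u₃ := by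
  classical
  letI := T.fintypeV
  set s := T.G.neighborSet v with hs
  have hfin : s.Finite := Set.toFinite _
  obtain ⟨u₁, hu₁⟩ := Set.nonempty_of_ncard_ne_zero (s := s) (by omega)
  have h2 : 2 ≤ (s \ {u₁}).ncard := by
    rw [Set.ncard_diff_singleton_of_mem hu₁]; omega
  obtain ⟨u₂, hu₂⟩ := Set.nonempty_of_ncard_ne_zero (s := s \ {u₁}) (by omega)
  have hsub : (s \ {u₁}) \ {u₂} ⊆ s := fun x hx => hx.1.1
  have h3 : 1 ≤ ((s \ {u₁}) \ {u₂}).ncard := by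
    rw [Set.ncard_diff_singleton_of_mem hu₂]
    omega
  obtain ⟨u₃, hu₃⟩ := Set.nonempty_of_ncard_ne_zero (s := (s \ {u₁}) \ {u₂}) (by omega)
  refine ⟨u₁, u₂, u₃, hu₁, hu₂.1, hu₃.1.1, ?_, ?_, ?_⟩
  · exact fun h' => hu₂.2 h'.symm
  · exact fun h' => hu₃.1.2 h'.symm
  · exact fun h' => hu₃.2 h'.symm

lemma MarkedTree.join_path (T : MarkedTree n) {v u₁ u₂ m₁ m₂ : T.V}
    {h₁ : T.G.Adj v u₁} {h₂ : T.G.Adj v u₂} (hne : u₁ ≠ u₂)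
    {δ₁ : T.G.Walk u₁ m₁} {δ₂ : T.G.Walk u₂ m₂}
    (hp₁ : (Walk.cons h₁ δ₁).IsPath) (hp₂ : (Walk.cons h₂ δ₂).IsPath) :
    ((Walk.cons h₁ δ₁).reverse.append (Walk.cons h₂ δ₂)).IsPath ∧
      v ∈ ((Walk.cons h₁ δ₁).reverse.append (Walk.cons h₂ δ₂)).support := by
  have hv₂ : v ∉ δ₂.support := ((Walk.cons_isPath_iff h₂ δ₂).mp hp₂).2
  constructor
  · rw [Walk.isPath_def, Walk.support_append, List.nodup_append]
    refine ⟨?_, ?_, ?_⟩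
    · rw [Walk.support_reverse]; exact List.nodup_reverse.mpr hp₁.2
    · rw [Walk.support_cons, List.tail_cons]; exact (List.nodup_cons.mp hp₂.2).2
    · intro a ha b ha' rfl
      rw [Walk.support_reverse, List.mem_reverse, Walk.support_cons] at ha
      rw [Walk.support_cons, List.tail_cons] at ha'
      rcases List.mem_cons.mp ha with rfl | ha₁
      · exact hv₂ ha'
      · exact T.branch_disjoint hne hp₁ hp₂ ha₁ ha'
  · rw [Walk.mem_support_append_iff]
    left
    exact Walk.end_mem_support _

lemma contraction_unique {T T₂ : MarkedTree n} (c c' : TreeContraction T T₂) (v : T.V) :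
    c.f v = c'.f v := by
  classical
  by_cases hm : v ∈ Set.range T.mark
  · obtain ⟨i, rfl⟩ := hm; rw [c.map_mark, c'.map_mark]
  have hdeg : 3 ≤ (T.G.neighborSet v).ncard := by
    by_contra hh; push_neg at hh; exact hm (T.degCond v (by omega))
  obtain ⟨u₁, u₂, u₃, hu₁, hu₂, hu₃, h12, h13, h23⟩ := T.three_neighbors hdeg
  obtain ⟨i₁, δ₁, hp₁⟩ := T.reach_mark hu₁
  obtain ⟨i₂, δ₂, hp₂⟩ := T.reach_mark hu₂
  obtain ⟨i₃, δ₃, hp₃⟩ := T.reach_mark hu₃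
  obtain ⟨hP12, hv12⟩ := T.join_path h12 hp₁ hp₂
  obtain ⟨hP13, hv13⟩ := T.join_path h13 hp₁ hp₃
  obtain ⟨hP23, hv23⟩ := T.join_path h23 hp₂ hp₃
  set P12 := (Walk.cons hu₁ δ₁).reverse.append (Walk.cons hu₂ δ₂) with hP12d
  set P13 := (Walk.cons hu₁ δ₁).reverse.append (Walk.cons hu₃ δ₃) with hP13d
  set P23 := (Walk.cons hu₂ δ₂).reverse.append (Walk.cons hu₃ δ₃) with hP23d
  let Q12 := (c.cmap P12).copy (c.map_mark i₁) (c.map_mark i₂)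
  let Q13 := (c.cmap P13).copy (c.map_mark i₁) (c.map_mark i₃)
  let Q23 := (c.cmap P23).copy (c.map_mark i₂) (c.map_mark i₃)
  let Q12' := (c'.cmap P12).copy (c'.map_mark i₁) (c'.map_mark i₂)
  let Q13' := (c'.cmap P13).copy (c'.map_mark i₁) (c'.map_mark i₃)
  let Q23' := (c'.cmap P23).copy (c'.map_mark i₂) (c'.map_mark i₃)
  have hQ12 : Q12.IsPath := (Walk.isPath_copy _ _ _).mpr (c.cmap_isPath hP12)
  have hQ13 : Q13.IsPath := (Walk.isPath_copy _ _ _).mpr (c.cmap_isPath hP13)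
  have hQ23 : Q23.IsPath := (Walk.isPath_copy _ _ _).mpr (c.cmap_isPath hP23)
  have hQ12' : Q12'.IsPath := (Walk.isPath_copy _ _ _).mpr (c'.cmap_isPath hP12)
  have hQ13' : Q13'.IsPath := (Walk.isPath_copy _ _ _).mpr (c'.cmap_isPath hP13)
  have hQ23' : Q23'.IsPath := (Walk.isPath_copy _ _ _).mpr (c'.cmap_isPath hP23)
  have he12 : Q12' = Q12 := T₂.path_unique hQ12' hQ12
  have he13 : Q13' = Q13 := T₂.path_unique hQ13' hQ13
  have he23 : Q23' = Q23 := T₂.path_unique hQ23' hQ23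
  have m12 : c.f v ∈ Q12.support := by
    rw [Walk.support_copy]; exact c.mem_support_cmap P12 hv12
  have m13 : c.f v ∈ Q13.support := by
    rw [Walk.support_copy]; exact c.mem_support_cmap P13 hv13
  have m23 : c.f v ∈ Q23.support := by
    rw [Walk.support_copy]; exact c.mem_support_cmap P23 hv23
  have m12' : c'.f v ∈ Q12.support := by
    rw [← he12, Walk.support_copy]; exact c'.mem_support_cmap P12 hv12
  have m13' : c'.f v ∈ Q13.support := by
    rw [← he13, Walk.support_copy]; exact c'.mem_support_cmap P13 hv13
  have m23' : c'.f v ∈ Q23.support := by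
    rw [← he23, Walk.support_copy]; exact c'.mem_support_cmap P23 hv23
  exact T₂.median_unique hQ12 hQ13 hQ23 m12 m13 m23 m12' m13' m23'

lemma reach_induce_of_walk {V : Type} {G : SimpleGraph V} {s : Set V} :
    ∀ {x y : V} (W : G.Walk x y), (∀ u ∈ W.support, u ∈ s) → ∀ (hx : x ∈ s) (hy : y ∈ s),
      (G.induce s).Reachable ⟨x, hx⟩ ⟨y, hy⟩ := by
  intro x y W
  induction W with
  | nil => intro _ hx hy; rfl
  | @cons a z b h W ih =>
    intro hsup hx hy
    have hz : z ∈ s := hsup z (by simp)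
    have hadj : (G.induce s).Adj ⟨a, hx⟩ ⟨z, hz⟩ := h
    exact hadj.reachable.trans (ih (fun u hu => hsup u (by simp [hu])) hz hy)

lemma TreeContraction.exists_path_fiber (c : TreeContraction T T') {x y : T.V}
    (h : c.f x = c.f y) :
    ∃ W : T.G.Walk x y, W.IsPath ∧ ∀ u ∈ W.support, c.f u = c.f x := by
  classical
  obtain ⟨W0⟩ := T.isTree.1 x y
  exact ⟨W0.bypass, W0.bypass_isPath, c.fiber_walk_const h W0.bypass_isPath⟩

lemma TreeContraction.push_reach (c : TreeContraction T T₁) {s : Set T₁.V} :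
    ∀ {x y : T.V} (W : T.G.Walk x y), (∀ u ∈ W.support, c.f u ∈ s) →
      ∀ (hx : c.f x ∈ s) (hy : c.f y ∈ s),
      (T₁.G.induce s).Reachable ⟨c.f x, hx⟩ ⟨c.f y, hy⟩ := by
  intro x y W
  induction W with
  | nil => intro _ hx hy; rfl
  | @cons a z b h W ih =>
    intro hsup hx hy
    have hz : c.f z ∈ s := hsup z (by simp)
    rcases c.map_adj h with heq | hadj
    · have : (⟨c.f a, hx⟩ : s) = ⟨c.f z, hz⟩ := Subtype.ext heq
      rw [this]
      exact ih (fun u hu => hsup u (by simp [hu])) hz hy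
    · have hadj' : (T₁.G.induce s).Adj ⟨c.f a, hx⟩ ⟨c.f z, hz⟩ := hadj
      exact hadj'.reachable.trans (ih (fun u hu => hsup u (by simp [hu])) hz hy)

lemma walk_down {V : Type} {G : SimpleGraph V} {s : Set V} {x y : ↑s}
    (W : (G.induce s).Walk x y) :
    ∃ W' : G.Walk x.1 y.1, ∀ u ∈ W'.support, u ∈ s := by
  refine ⟨W.map (SimpleGraph.Embedding.induce s).toHom, ?_⟩
  intro u hu
  have hu : u ∈ (W.map (SimpleGraph.Embedding.induce s).toHom).support := hu
  rw [Walk.support_map] at hu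
  obtain ⟨⟨u', hu'⟩, _, rfl⟩ := List.mem_map.mp hu
  exact hu'

lemma TreeContraction.lift_reach (c₁ : TreeContraction T T₁) {s : Set T.V} :
    ∀ {a b : T₁.V} (W : T₁.G.Walk a b), (∀ z ∈ W.support, ∀ u, c₁.f u = z → u ∈ s) →
      ∀ {x y : T.V} (hx : c₁.f x = a) (hy : c₁.f y = b) (hxs : x ∈ s) (hys : y ∈ s),
      (T.G.induce s).Reachable ⟨x, hxs⟩ ⟨y, hys⟩ := by
  intro a b W
  induction W with
  | nil =>
    intro hsup x y hx hy hxs hys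
    obtain ⟨W0, _, hWs⟩ := c₁.exists_path_fiber (x := x) (y := y) (by rw [hx, hy])
    refine reach_induce_of_walk W0 (fun u hu => hsup _ (Walk.start_mem_support _) u ?_) hxs hys
    rw [hWs u hu]; exact hx
  | @cons a z b h W ih =>
    intro hsup x y hx hy hxs hys
    obtain ⟨p, q, hpq, hp, hq⟩ := c₁.edge_lift h
    have hps : p ∈ s := hsup a (by simp) p hp
    have hqs : q ∈ s := hsup z (by simp) q hq
    obtain ⟨W0, _, hWs⟩ := c₁.exists_path_fiber (x := x) (y := p) (by rw [hx, hp])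
    have r1 : (T.G.induce s).Reachable ⟨x, hxs⟩ ⟨p, hps⟩ :=
      reach_induce_of_walk W0 (fun u hu => hsup a (by simp) u (by rw [hWs u hu, hx])) hxs hps
    have r2 : (T.G.induce s).Reachable ⟨p, hps⟩ ⟨q, hqs⟩ := by
      have hadj : (T.G.induce s).Adj ⟨p, hps⟩ ⟨q, hqs⟩ := hpq
      exact hadj.reachable
    have r3 := ih (fun t ht u hu => hsup t (by simp [ht]) u hu) hq hy hqs hys
    exact (r1.trans r2).trans r3

noncomputable def TreeContraction.comp (g : TreeContraction T₁ T₂) (c₁ : TreeContraction T T₁) :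
    TreeContraction T T₂ where
  f := g.f ∘ c₁.f
  surj := g.surj.comp c₁.surj
  map_adj := by
    intro a b h
    rcases c₁.map_adj h with h' | h'
    · left; simp only [Function.comp_apply, h']
    · exact g.map_adj h'
  fiber_conn := by
    intro w
    set s : Set T.V := (g.f ∘ c₁.f) ⁻¹' {w} with hs
    rw [SimpleGraph.connected_iff]
    refine ⟨?_, ?_⟩
    · rintro ⟨x, hx⟩ ⟨y, hy⟩
      have hgx : g.f (c₁.f x) = w := hx
      have hgy : g.f (c₁.f y) = w := hy
      obtain ⟨W⟩ := (g.fiber_conn w).preconnected ⟨c₁.f x, hgx⟩ ⟨c₁.f y, hgy⟩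
      obtain ⟨W', hW'⟩ := walk_down W
      exact c₁.lift_reach W' (fun z hz u hu => by
        have := hW' z hz
        simp only [hs, Set.mem_preimage, Function.comp_apply, Set.mem_singleton_iff, hu]
        exact this) rfl rfl hx hy
    · obtain ⟨x, hx⟩ := (g.surj.comp c₁.surj) w
      exact ⟨⟨x, hx⟩⟩
  map_mark := by
    intro i
    simp only [Function.comp_apply, c₁.map_mark, g.map_mark]

lemma TreeContraction.glue_key (c₁ : TreeContraction T T₁) (c₂ : TreeContraction T T₂)
    (hsub : c₁.forest ⊆ c₂.forest) {x y : T.V} (h : c₁.f x = c₁.f y) : c₂.f x = c₂.f y := by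
  obtain ⟨W, hWp, hWs⟩ := c₁.exists_path_fiber h
  clear h hWp
  induction W with
  | nil => rfl
  | @cons a z b hadj W ih =>
    have hfz : c₁.f a = c₁.f z := by
      rw [hWs a (by simp)]
      rw [hWs z (by simp)]
    have hmem : s(a, z) ∈ c₂.forest := hsub ⟨a, z, rfl, hadj, hfz⟩
    have h2 : c₂.f a = c₂.f z := (c₂.mem_forest_iff.mp hmem).2
    refine h2.trans (ih ?_)
    intro u hu
    rw [hWs u (by simp [hu]), ← hfz]

noncomputable def TreeContraction.glue (c₁ : TreeContraction T T₁) (c₂ : TreeContraction T T₂)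
    (hsub : c₁.forest ⊆ c₂.forest) : TreeContraction T₁ T₂ where
  f := c₂.f ∘ Function.surjInv c₁.surj
  surj := by
    intro w
    obtain ⟨x, hx⟩ := c₂.surj w
    refine ⟨c₁.f x, ?_⟩
    simp only [Function.comp_apply]
    rw [c₁.glue_key c₂ hsub (Function.surjInv_eq c₁.surj (c₁.f x)), hx]
  map_adj := by
    intro a b h
    obtain ⟨p, q, hpq, hp, hq⟩ := c₁.edge_lift h
    simp only [Function.comp_apply]
    subst hp hq
    rw [c₁.glue_key c₂ hsub (Function.surjInv_eq c₁.surj (c₁.f p)),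
      c₁.glue_key c₂ hsub (Function.surjInv_eq c₁.surj (c₁.f q))]
    exact c₂.map_adj hpq
  fiber_conn := by
    intro w
    set gf : T₁.V → T₂.V := c₂.f ∘ Function.surjInv c₁.surj with hgf
    have hkey : ∀ x : T.V, gf (c₁.f x) = c₂.f x := fun x =>
      c₁.glue_key c₂ hsub (Function.surjInv_eq c₁.surj (c₁.f x))
    set s : Set T₁.V := gf ⁻¹' {w} with hs
    rw [SimpleGraph.connected_iff]
    constructor
    · rintro ⟨a, ha⟩ ⟨b, hb⟩
      obtain ⟨x, hx⟩ := c₁.surj a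
      obtain ⟨y, hy⟩ := c₁.surj b
      have hcx : c₂.f x = w := by rw [← hkey x, hx]; exact ha
      have hcy : c₂.f y = w := by rw [← hkey y, hy]; exact hb
      obtain ⟨W⟩ := (c₂.fiber_conn w).preconnected ⟨x, hcx⟩ ⟨y, hcy⟩
      obtain ⟨W', hW'⟩ := walk_down W
      have hsup : ∀ u ∈ W'.support, c₁.f u ∈ s := by
        intro u hu
        have : c₂.f u = w := hW' u hu
        simp only [hs, Set.mem_preimage, Set.mem_singleton_iff, hkey u, this]
      have := c₁.push_reach W' hsup (by rw [hx]; exact ha) (by rw [hy]; exact hb)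
      have hea : (⟨c₁.f x, by rw [hx]; exact ha⟩ : s) = ⟨a, ha⟩ := Subtype.ext hx
      have heb : (⟨c₁.f y, by rw [hy]; exact hb⟩ : s) = ⟨b, hb⟩ := Subtype.ext hy
      rwa [hea, heb] at this
    · obtain ⟨x, hx⟩ := c₂.surj w
      exact ⟨⟨c₁.f x, by simp only [hs, Set.mem_preimage, Set.mem_singleton_iff, hkey x, hx]⟩⟩
  map_mark := by
    intro i
    simp only [Function.comp_apply]
    rw [← c₁.map_mark i, c₁.glue_key c₂ hsub (Function.surjInv_eq c₁.surj (c₁.f (T.mark i))),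
      c₂.map_mark]


/-- Given contractions `Γ → Γ₁` and `Γ → Γ₂` of marked `n`-trees,
there is a contraction `Γ₁ → Γ₂` if and only if the subforest `F(Γ,Γ₁)` is a
subforest of `F(Γ,Γ₂)`. -/
theorem contraction_exists_iff_subforest {n : ℕ} (T T₁ T₂ : MarkedTree n)
    (c₁ : TreeContraction T T₁) (c₂ : TreeContraction T T₂) :
    Nonempty (TreeContraction T₁ T₂) ↔ c₁.forest ⊆ c₂.forest := by
  constructor
  · rintro ⟨g⟩ e he
    obtain ⟨a, b, rfl, hadj, hf⟩ := he
    have ha := contraction_unique (g.comp c₁) c₂ a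
    have hb := contraction_unique (g.comp c₁) c₂ b
    have ha' : g.f (c₁.f a) = c₂.f a := ha
    have hb' : g.f (c₁.f b) = c₂.f b := hb
    exact ⟨a, b, rfl, hadj, by rw [← ha', ← hb', hf]⟩
  · intro hsub
    exact ⟨c₁.glue c₂ hsub⟩
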